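/- Let p be a prime and let h ≥ 1, M ≥ 1 be integers. Define b : ℤ_{≥0} → ℤ_{≥0} by b(m) = ⌊(√(8m+1) − 1)/2⌋, i.e., b(m) is the unique nonnegative integer t with t(t+1)/2 ≤ m < (t+1)(t+2)/2. Let A be an (hM)×(hM) matrix with entries in ℚ_p, with rows and columns indexed by {0, 1, …, hM−1}, such that ‖A_{ij}‖_p ≤ p^{−b(⌊i/h⌋)} for all i, j. Then for every integer i ≥ 1 with i(i+1)h/2 ≤ hM, the coefficient of T^{i(i+1)h/2} in det(1 − T·A) ∈ ℚ_p[T] has p-adic norm at most p^{−(i−1)i(i+1)h/3}. -/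

import Mathlib

open Finset Polynomial NNReal

noncomputable def bfun (m : ℕ) : ℕ := ⌊(Real.sqrt (8 * (m : ℝ) + 1) - 1) / 2⌋₊

lemma bfun_mono : Monotone bfun := by
  intro a b hab
  apply Nat.floor_mono
  have hc : (a : ℝ) ≤ b := by exact_mod_cast hab
  have : Real.sqrt (8 * (a : ℝ) + 1) ≤ Real.sqrt (8 * (b : ℝ) + 1) :=
    Real.sqrt_le_sqrt (by linarith)
  linarith

lemma bfun_eq {t m : ℕ} (h1 : t * (t + 1) ≤ 2 * m) (h2 : 2 * m < (t + 1) * (t + 2)) :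
    bfun m = t := by
  have h1' : (t : ℝ) * (t + 1) ≤ 2 * m := by exact_mod_cast h1
  have h2' : (2 * m : ℝ) < (t + 1) * (t + 2) := by exact_mod_cast h2
  have hs1 : (2 * (t : ℝ) + 1) ≤ Real.sqrt (8 * m + 1) :=
    (Real.le_sqrt (by positivity) (by positivity)).mpr (by nlinarith)
  have hs2 : Real.sqrt (8 * (m : ℝ) + 1) < 2 * t + 3 :=
    (Real.sqrt_lt' (by positivity)).mpr (by nlinarith)
  rw [bfun, Nat.floor_eq_iff (by linarith)]
  constructor
  · linarith
  · linarith

def tri : ℕ → ℕ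
  | 0 => 0
  | (i + 1) => tri i + (i + 1)

lemma two_tri (i : ℕ) : 2 * tri i = i * (i + 1) := by
  induction i with
  | zero => rfl
  | succ n ih => simp only [tri]; nlinarith

def cub : ℕ → ℕ
  | 0 => 0
  | (i + 1) => cub i + i * (i + 1)

lemma three_cub (i : ℕ) : 3 * cub (i + 1) = i * (i + 1) * (i + 2) := by
  induction i with
  | zero => rfl
  | succ n ih => simp only [cub] at *; nlinarith

lemma bfun_tri {t m : ℕ} (h1 : tri t ≤ m) (h2 : m < tri (t + 1)) : bfun m = t := by
  apply bfun_eq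
  · calc t * (t + 1) = 2 * tri t := (two_tri t).symm
      _ ≤ 2 * m := by omega
  · calc 2 * m < 2 * tri (t + 1) := by omega
      _ = (t + 1) * (t + 2) := two_tri (t + 1)

lemma main_sum (h : ℕ) (hh : 1 ≤ h) (i : ℕ) :
    ∑ m ∈ Finset.range (h * tri i), bfun (m / h) = h * cub i := by
  induction i with
  | zero => simp [tri, cub]
  | succ n ih =>
    have hsplit : h * tri (n + 1) = h * tri n + h * (n + 1) := by simp [tri]; ring
    rw [hsplit, Finset.range_eq_Ico,
      ← Finset.sum_Ico_consecutive _ (Nat.zero_le (h * tri n)) (Nat.le_add_right _ _),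
      ← Finset.range_eq_Ico, ih]
    have hconst : ∀ m ∈ Finset.Ico (h * tri n) (h * tri n + h * (n + 1)), bfun (m / h) = n := by
      intro m hm
      rw [Finset.mem_Ico] at hm
      apply bfun_tri
      · rw [Nat.le_div_iff_mul_le (by omega)]
        calc tri n * h = h * tri n := by ring
          _ ≤ m := hm.1
      · rw [Nat.div_lt_iff_lt_mul (by omega)]
        calc m < h * tri n + h * (n + 1) := hm.2
          _ = tri (n + 1) * h := by simp [tri]; ring
    rw [Finset.sum_congr rfl hconst, Finset.sum_const, Nat.card_Ico,
      Nat.add_sub_cancel_left, smul_eq_mul]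
    simp only [cub]
    ring

lemma sum_range_le_sum_finset (f : ℕ → ℕ) (hf : Monotone f) :
    ∀ (n : ℕ) (T : Finset ℕ), T.card = n → ∑ m ∈ Finset.range n, f m ≤ ∑ r ∈ T, f r := by
  intro n
  induction n with
  | zero => simp
  | succ m ih =>
    intro T hT
    have hne : T.Nonempty := Finset.card_pos.mp (by omega)
    have hx : T.max' hne ∈ T := T.max'_mem hne
    have hcard : (T.erase (T.max' hne)).card = m := by
      rw [Finset.card_erase_of_mem hx, hT]
      omega
    have hle : m ≤ T.max' hne := by
      have hsub : T ⊆ Finset.range (T.max' hne + 1) := fun y hy =>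
        Finset.mem_range.mpr (Nat.lt_succ_of_le (T.le_max' y hy))
      have := Finset.card_le_card hsub
      rw [hT, Finset.card_range] at this
      omega
    calc ∑ k ∈ Finset.range (m + 1), f k = ∑ k ∈ Finset.range m, f k + f m :=
        Finset.sum_range_succ f m
      _ ≤ ∑ r ∈ T.erase (T.max' hne), f r + f (T.max' hne) :=
        add_le_add (ih _ hcard) (hf hle)
      _ = ∑ r ∈ T, f r := Finset.sum_erase_add T f hx

lemma coeff_prod_le {p : ℕ} [Fact p.Prime] {ι : Type*} [DecidableEq ι]
    (g : ι → Polynomial ℚ_[p]) (w : ι → ℝ≥0) (s : Finset ι)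
    (h0 : ∀ j ∈ s, ‖(g j).coeff 0‖₊ ≤ 1)
    (h1 : ∀ j ∈ s, ‖(g j).coeff 1‖₊ ≤ w j)
    (hdeg : ∀ j ∈ s, (g j).degree ≤ 1) :
    ∀ n, ‖(∏ j ∈ s, g j).coeff n‖₊ ≤
      (s.powersetCard n).sup (fun S => ∏ j ∈ S, w j) := by
  induction s using Finset.induction_on with
  | empty =>
    intro n
    cases n with
    | zero =>
      simp only [Finset.prod_empty, Polynomial.coeff_one_zero, nnnorm_one,
        Finset.powersetCard_zero]
      exact Finset.le_sup (f := fun S => ∏ j ∈ S, w j) (Finset.mem_singleton_self ∅)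
    | succ m =>
      rw [Finset.prod_empty, Polynomial.coeff_one]
      simp
  | @insert a s ha ih =>
    intro n
    have h0' : ∀ j ∈ s, ‖(g j).coeff 0‖₊ ≤ 1 := fun j hj => h0 j (Finset.mem_insert_of_mem hj)
    have h1' : ∀ j ∈ s, ‖(g j).coeff 1‖₊ ≤ w j := fun j hj => h1 j (Finset.mem_insert_of_mem hj)
    have hdeg' : ∀ j ∈ s, (g j).degree ≤ 1 := fun j hj => hdeg j (Finset.mem_insert_of_mem hj)
    have IH := ih h0' h1' hdeg'
    have hsub : ∀ m, (s.powersetCard m).sup (fun S => ∏ j ∈ S, w j) ≤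
        ((insert a s).powersetCard m).sup (fun S => ∏ j ∈ S, w j) := by
      intro m
      apply Finset.sup_le
      intro S hS
      rw [Finset.mem_powersetCard] at hS
      exact Finset.le_sup (f := fun S => ∏ j ∈ S, w j) (Finset.mem_powersetCard.mpr
        ⟨hS.1.trans (Finset.subset_insert a s), hS.2⟩)
    have hrep : g a = Polynomial.C ((g a).coeff 1) * Polynomial.X + Polynomial.C ((g a).coeff 0) :=
      Polynomial.eq_X_add_C_of_degree_le_one (hdeg a (Finset.mem_insert_self a s))
    rw [Finset.prod_insert ha]
    set P := ∏ j ∈ s, g j with hP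
    have hco : ∀ n, (g a * P).coeff n =
        (g a).coeff 1 * (Polynomial.X * P).coeff n + (g a).coeff 0 * P.coeff n := by
      intro n
      conv_lhs => rw [hrep]
      rw [add_mul, Polynomial.coeff_add, mul_assoc, Polynomial.coeff_C_mul,
        Polynomial.coeff_C_mul]
    cases n with
    | zero =>
      rw [hco 0, Polynomial.mul_coeff_zero, Polynomial.coeff_X_zero, zero_mul, mul_zero, zero_add]
      calc ‖(g a).coeff 0 * P.coeff 0‖₊ = ‖(g a).coeff 0‖₊ * ‖P.coeff 0‖₊ := nnnorm_mul _ _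
        _ ≤ 1 * ((s.powersetCard 0).sup (fun S => ∏ j ∈ S, w j)) :=
          mul_le_mul' (h0 a (Finset.mem_insert_self a s)) (IH 0)
        _ = (s.powersetCard 0).sup (fun S => ∏ j ∈ S, w j) := one_mul _
        _ ≤ _ := hsub 0
    | succ m =>
      rw [hco (m + 1), Polynomial.coeff_X_mul]
      refine le_trans (IsUltrametricDist.nnnorm_add_le_max _ _) (max_le ?_ ?_)
      · calc ‖(g a).coeff 1 * P.coeff m‖₊ = ‖(g a).coeff 1‖₊ * ‖P.coeff m‖₊ := nnnorm_mul _ _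
          _ ≤ w a * ((s.powersetCard m).sup (fun S => ∏ j ∈ S, w j)) :=
            mul_le_mul' (h1 a (Finset.mem_insert_self a s)) (IH m)
          _ ≤ _ := by
            rcases (s.powersetCard m).eq_empty_or_nonempty with he | hne
            · simp [he]
            · obtain ⟨S, hS, hSeq⟩ := Finset.exists_mem_eq_sup _ hne (fun S => ∏ j ∈ S, w j)
              rw [hSeq]
              rw [Finset.mem_powersetCard] at hS
              have haS : a ∉ S := fun hmem => ha (hS.1 hmem)
              calc w a * ∏ j ∈ S, w j = ∏ j ∈ insert a S, w j :=
                  (Finset.prod_insert haS).symm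
                _ ≤ _ := Finset.le_sup (f := fun S => ∏ j ∈ S, w j) (Finset.mem_powersetCard.mpr
                    ⟨Finset.insert_subset_insert a hS.1,
                     by rw [Finset.card_insert_of_notMem haS, hS.2]⟩)
      · calc ‖(g a).coeff 0 * P.coeff (m + 1)‖₊
            = ‖(g a).coeff 0‖₊ * ‖P.coeff (m + 1)‖₊ := nnnorm_mul _ _
          _ ≤ 1 * ((s.powersetCard (m + 1)).sup (fun S => ∏ j ∈ S, w j)) :=
            mul_le_mul' (h0 a (Finset.mem_insert_self a s)) (IH (m + 1))
          _ = _ := one_mul _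
          _ ≤ _ := hsub (m + 1)

lemma coe_q_pow (p b : ℕ) : ((((p : ℝ≥0))⁻¹ ^ b : ℝ≥0) : ℝ) = (p : ℝ) ^ (-(b : ℤ)) := by
  rw [zpow_neg, zpow_natCast, NNReal.coe_pow, NNReal.coe_inv, NNReal.coe_natCast, inv_pow]

theorem stmt10 (p : ℕ) [Fact p.Prime] (h M : ℕ) (hh : 1 ≤ h) (hM : 1 ≤ M)
    (A : Matrix (Fin (h * M)) (Fin (h * M)) ℚ_[p])
    (hA : ∀ i j : Fin (h * M), ‖A i j‖ ≤
      (p : ℝ) ^ (-((⌊(Real.sqrt (8 * (((i : ℕ) / h : ℕ) : ℝ) + 1) - 1) / 2⌋₊ : ℕ) : ℤ)))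
    (i : ℕ) (hi : 1 ≤ i) (hiM : i * (i + 1) * h / 2 ≤ h * M) :
    ‖(Matrix.det ((1 : Matrix (Fin (h * M)) (Fin (h * M)) (Polynomial ℚ_[p])) -
          (Polynomial.X : Polynomial ℚ_[p]) •
            A.map (Polynomial.C : ℚ_[p] →+* Polynomial ℚ_[p]))).coeff
        (i * (i + 1) * h / 2)‖ ≤
      (p : ℝ) ^ (-(((i - 1) * i * (i + 1) * h / 3 : ℕ) : ℤ)) := by
  classical
  obtain ⟨j, rfl⟩ : ∃ j, i = j + 1 := ⟨i - 1, by omega⟩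
  have hA' : ∀ a b : Fin (h * M), ‖A a b‖ ≤ (p : ℝ) ^ (-((bfun ((a : ℕ) / h) : ℕ) : ℤ)) := hA
  have hppos : 0 < p := (Fact.out : p.Prime).pos
  have hq1 : (p : ℝ≥0)⁻¹ ≤ 1 := by
    rw [inv_le_one_iff₀]
    right
    exact_mod_cast hppos
  set k := (j + 1) * (j + 1 + 1) * h / 2 with hk
  set N := (j + 1 - 1) * (j + 1) * (j + 1 + 1) * h / 3 with hN
  have hkeq : k = h * tri (j + 1) := by
    have h2 : (j + 1) * (j + 1 + 1) * h = 2 * (h * tri (j + 1)) := by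
      rw [show 2 * (h * tri (j + 1)) = (2 * tri (j + 1)) * h by ring, two_tri]
    rw [hk, h2, Nat.mul_div_cancel_left _ (by norm_num)]
  have hNeq : N = h * cub (j + 1) := by
    have h3 : (j + 1 - 1) * (j + 1) * (j + 1 + 1) * h = 3 * (h * cub (j + 1)) := by
      rw [show 3 * (h * cub (j + 1)) = (3 * cub (j + 1)) * h by ring, three_cub]
      simp only [Nat.add_sub_cancel]
    rw [hN, h3, Nat.mul_div_cancel_left _ (by norm_num)]
  rw [← coe_nnnorm, ← coe_q_pow p N, NNReal.coe_le_coe]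
  rw [Matrix.det_apply', Polynomial.finset_sum_coeff]
  apply IsUltrametricDist.nnnorm_sum_le_of_forall_le
  intro σ _
  have key : ‖(∏ x, ((1 : Matrix (Fin (h * M)) (Fin (h * M)) (Polynomial ℚ_[p])) -
      (Polynomial.X : Polynomial ℚ_[p]) •
        A.map (Polynomial.C : ℚ_[p] →+* Polynomial ℚ_[p])) (σ x) x).coeff k‖₊ ≤
      (p : ℝ≥0)⁻¹ ^ N := by
    refine le_trans (coeff_prod_le _
      (fun x => (p : ℝ≥0)⁻¹ ^ bfun ((σ x : ℕ) / h)) Finset.univ ?_ ?_ ?_ k) ?_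
    · intro x _
      simp only [Matrix.sub_apply, Matrix.smul_apply, Matrix.map_apply, Matrix.one_apply,
        smul_eq_mul, Polynomial.coeff_sub, Polynomial.mul_coeff_zero, Polynomial.coeff_X_zero,
        zero_mul, sub_zero]
      split_ifs
      · simp
      · simp
    · intro x _
      simp only [Matrix.sub_apply, Matrix.smul_apply, Matrix.map_apply, Matrix.one_apply,
        smul_eq_mul, Polynomial.coeff_sub]
      have h1c : ((if σ x = x then 1 else 0 : Polynomial ℚ_[p])).coeff 1 = 0 := by
        split_ifs <;> simp [Polynomial.coeff_one]
      have h2c : ((Polynomial.X : Polynomial ℚ_[p]) * Polynomial.C (A (σ x) x)).coeff 1 =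
          A (σ x) x := by
        rw [show (1 : ℕ) = 0 + 1 from rfl, Polynomial.coeff_X_mul, Polynomial.coeff_C_zero]
      rw [h1c, h2c, zero_sub, nnnorm_neg]
      rw [← NNReal.coe_le_coe, coe_nnnorm, coe_q_pow]
      exact hA' (σ x) x
    · intro x _
      simp only [Matrix.sub_apply, Matrix.smul_apply, Matrix.map_apply, Matrix.one_apply,
        smul_eq_mul]
      refine le_trans (Polynomial.degree_sub_le _ _) (max_le ?_ ?_)
      · split_ifs
        · exact le_trans Polynomial.degree_one_le (by norm_num)
        · simp
      · calc ((Polynomial.X : Polynomial ℚ_[p]) * Polynomial.C (A (σ x) x)).degree ≤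
            (Polynomial.X : Polynomial ℚ_[p]).degree + (Polynomial.C (A (σ x) x)).degree :=
            Polynomial.degree_mul_le _ _
          _ ≤ 1 + 0 := add_le_add (le_of_eq Polynomial.degree_X) Polynomial.degree_C_le
          _ = 1 := by simp
    · apply Finset.sup_le
      intro S hS
      rw [Finset.mem_powersetCard] at hS
      rw [Finset.prod_pow_eq_pow_sum]
      apply pow_le_pow_of_le_one zero_le hq1
      have hinj : ∀ x ∈ S, ∀ y ∈ S, ((σ x : Fin (h * M)) : ℕ) = ((σ y : Fin (h * M)) : ℕ) →
          x = y := fun x _ y _ hxy => σ.injective (Fin.val_injective hxy)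
      set T : Finset ℕ := S.image (fun x => ((σ x : Fin (h * M)) : ℕ)) with hT
      have hTcard : T.card = k := by
        rw [hT, Finset.card_image_of_injOn (fun x hx y hy => hinj x hx y hy), hS.2]
      have hsum : ∑ r ∈ T, bfun (r / h) = ∑ x ∈ S, bfun ((σ x : ℕ) / h) := by
        rw [hT, Finset.sum_image hinj]
      have hmono : Monotone (fun m => bfun (m / h)) :=
        fun a b hab => bfun_mono (Nat.div_le_div_right hab)
      have hge := sum_range_le_sum_finset _ hmono k T hTcard
      rw [hkeq, main_sum h hh (j + 1)] at hge
      calc N = h * cub (j + 1) := hNeq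
        _ ≤ ∑ r ∈ T, bfun (r / h) := hge
        _ = ∑ x ∈ S, bfun ((σ x : ℕ) / h) := hsum
  rcases Int.units_eq_one_or (Equiv.Perm.sign σ) with hσ | hσ <;> rw [hσ]
  · simp only [Units.val_one, Int.cast_one, one_mul]
    exact key
  · simp only [Units.val_neg, Units.val_one, Int.cast_neg, Int.cast_one, neg_mul, one_mul,
      Polynomial.coeff_neg, nnnorm_neg]
    exact key
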